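/- arXiv:2009.06776 — 3 statements merged into one kernel-verified Lean document; each statement's English description precedes it below -/
import Mathlib

section
/- Let ψ, φ be unit vectors in ℂ^d, δ ∈ [0,1], and set a = |⟨ψ|φ⟩|. If a > √δ, then the minimum of ⟨φ|Ω|φ⟩ over all Hermitian operators Ω with 0 ≤ Ω ≤ I and ⟨ψ|Ω|ψ⟩ ≥ 1 − δ equals (a√(1−δ) − √(1−a²)·√δ)². -/
open Matrix
open scoped ComplexOrder

lemma conj_dot {d : ℕ} (u v : Fin d → ℂ) : starRingEnd ℂ (star u ⬝ᵥ v) = star v ⬝ᵥ u := by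
  simp [dotProduct, map_sum, mul_comm]

lemma dot_self_re_eq {d : ℕ} (u : Fin d → ℂ) :
    (star u ⬝ᵥ u).re = ∑ i, Complex.normSq (u i) := by
  simp only [dotProduct, Pi.star_apply, Complex.re_sum]
  refine Finset.sum_congr rfl fun i _ => ?_
  rw [show star (u i) = starRingEnd ℂ (u i) from rfl, ← Complex.normSq_eq_conj_mul_self]
  simp

lemma dot_self_eq {d : ℕ} (u : Fin d → ℂ) :
    star u ⬝ᵥ u = ((∑ i, Complex.normSq (u i) : ℝ) : ℂ) := by
  simp only [dotProduct, Pi.star_apply, Complex.ofReal_sum]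
  refine Finset.sum_congr rfl fun i _ => ?_
  rw [show star (u i) = starRingEnd ℂ (u i) from rfl, ← Complex.normSq_eq_conj_mul_self]

lemma norm_euc {d : ℕ} (u : Fin d → ℂ) :
    ‖(WithLp.equiv 2 (Fin d → ℂ)).symm u‖ = Real.sqrt (star u ⬝ᵥ u).re := by
  rw [EuclideanSpace.norm_eq, dot_self_re_eq]
  congr 1
  refine Finset.sum_congr rfl fun i _ => ?_
  rw [← Complex.sq_norm]
  rfl

lemma dot_cs {d : ℕ} (u v : Fin d → ℂ) :
    ‖star u ⬝ᵥ v‖ ≤ Real.sqrt (star u ⬝ᵥ u).re * Real.sqrt (star v ⬝ᵥ v).re := by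
  have h := norm_inner_le_norm (𝕜 := ℂ)
    ((WithLp.equiv 2 (Fin d → ℂ)).symm u) ((WithLp.equiv 2 (Fin d → ℂ)).symm v)
  rw [EuclideanSpace.inner_eq_star_dotProduct, norm_euc, norm_euc] at h
  simpa [dotProduct_comm] using h

section Membership
variable {d : ℕ}

lemma vecMulVec_mulVec' (χ x : Fin d → ℂ) :
    Matrix.vecMulVec χ (star χ) *ᵥ x = (star χ ⬝ᵥ x) • χ := by
  ext i
  simp [Matrix.vecMulVec_apply, Matrix.mulVec, dotProduct, Finset.mul_sum, mul_comm, mul_assoc,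
    mul_left_comm]

lemma quad_form (χ x y : Fin d → ℂ) :
    star x ⬝ᵥ (Matrix.vecMulVec χ (star χ) *ᵥ y) = (star x ⬝ᵥ χ) * (star χ ⬝ᵥ y) := by
  rw [vecMulVec_mulVec', dotProduct_smul, smul_eq_mul]
  ring

lemma vecMulVec_herm (χ : Fin d → ℂ) : (Matrix.vecMulVec χ (star χ)).IsHermitian := by
  ext i j
  simp [Matrix.conjTranspose_apply, Matrix.vecMulVec_apply, mul_comm]

lemma vecMulVec_psd (χ : Fin d → ℂ) : (Matrix.vecMulVec χ (star χ)).PosSemidef := by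
  refine Matrix.PosSemidef.of_dotProduct_mulVec_nonneg (vecMulVec_herm χ) fun x => ?_
  rw [quad_form]
  rw [show star x ⬝ᵥ χ = starRingEnd ℂ (star χ ⬝ᵥ x) from (conj_dot χ x).symm]
  rw [show starRingEnd ℂ (star χ ⬝ᵥ x) * (star χ ⬝ᵥ x) = ((Complex.normSq (star χ ⬝ᵥ x) : ℝ) : ℂ) by
    rw [mul_comm, Complex.mul_conj]]
  exact Complex.zero_le_real.2 (Complex.normSq_nonneg _)

lemma one_sub_vecMulVec_psd (χ : Fin d → ℂ) (hχ : (star χ ⬝ᵥ χ).re ≤ 1) :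
    ((1 : Matrix (Fin d) (Fin d) ℂ) - Matrix.vecMulVec χ (star χ)).PosSemidef := by
  refine Matrix.PosSemidef.of_dotProduct_mulVec_nonneg ?_ ?_
  · rw [Matrix.IsHermitian, Matrix.conjTranspose_sub, Matrix.conjTranspose_one,
      (vecMulVec_herm χ).eq]
  · intro x
    rw [Matrix.sub_mulVec, dotProduct_sub, Matrix.one_mulVec, quad_form]
    set z := star χ ⬝ᵥ x with hz
    rw [show star x ⬝ᵥ χ = starRingEnd ℂ z from (conj_dot χ x).symm]
    rw [show starRingEnd ℂ z * z = ((Complex.normSq z : ℝ) : ℂ) by rw [mul_comm, Complex.mul_conj]]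
    rw [dot_self_eq x, ← Complex.ofReal_sub]
    refine Complex.zero_le_real.2 ?_
    rw [sub_nonneg]
    -- normSq z ≤ ∑ normSq x i
    have h1 := dot_cs χ x
    have hx0 : (0:ℝ) ≤ (star x ⬝ᵥ x).re := by
      rw [dot_self_re_eq]; exact Finset.sum_nonneg fun i _ => Complex.normSq_nonneg _
    have hc0 : (0:ℝ) ≤ (star χ ⬝ᵥ χ).re := by
      rw [dot_self_re_eq]; exact Finset.sum_nonneg fun i _ => Complex.normSq_nonneg _
    have h2 : Complex.normSq z ≤ (star χ ⬝ᵥ χ).re * (star x ⬝ᵥ x).re := by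
      rw [← Complex.sq_norm]
      calc ‖z‖ ^ 2 ≤ (Real.sqrt (star χ ⬝ᵥ χ).re * Real.sqrt (star x ⬝ᵥ x).re) ^ 2 := by
            apply pow_le_pow_left₀ (norm_nonneg _) h1
      _ = (star χ ⬝ᵥ χ).re * (star x ⬝ᵥ x).re := by
            rw [mul_pow, Real.sq_sqrt hc0, Real.sq_sqrt hx0]
    calc Complex.normSq z ≤ (star χ ⬝ᵥ χ).re * (star x ⬝ᵥ x).re := h2
    _ ≤ 1 * (star x ⬝ᵥ x).re := by apply mul_le_mul_of_nonneg_right hχ hx0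
    _ = ∑ i, Complex.normSq (x i) := by rw [one_mul, dot_self_re_eq]

end Membership


lemma membership {d : ℕ} (ψ φ : Fin d → ℂ) (δ a : ℝ)
    (hψ : star ψ ⬝ᵥ ψ = 1) (hφ : star φ ⬝ᵥ φ = 1)
    (hδ : δ ∈ Set.Icc (0 : ℝ) 1)
    (ha : a = ‖star ψ ⬝ᵥ φ‖)
    (hover : Real.sqrt δ < a) :
    ∃ Ω : Matrix (Fin d) (Fin d) ℂ, Ω.PosSemidef ∧ (1 - Ω).PosSemidef ∧
      1 - δ ≤ (star ψ ⬝ᵥ (Ω *ᵥ ψ)).re ∧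
      (a * Real.sqrt (1 - δ) - Real.sqrt (1 - a ^ 2) * Real.sqrt δ) ^ 2
        = (star φ ⬝ᵥ (Ω *ᵥ φ)).re := by
  obtain ⟨hδ0, hδ1⟩ := hδ
  have ha0 : 0 < a := lt_of_le_of_lt (Real.sqrt_nonneg δ) hover
  set g := star ψ ⬝ᵥ φ with hg
  have ha1 : a ≤ 1 := by
    have h := dot_cs ψ φ
    rw [hψ, hφ] at h
    simpa [ha] using h
  have h1a2 : (0:ℝ) ≤ 1 - a ^ 2 := by nlinarith
  have haC : (a : ℂ) ≠ 0 := by exact_mod_cast ne_of_gt ha0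
  have hgg : starRingEnd ℂ g * g = ((a : ℝ) : ℂ) ^ 2 := by
    rw [mul_comm, Complex.mul_conj, ha]
    norm_cast
    exact Complex.normSq_eq_norm_sq g
  set s := Real.sqrt (1 - δ) with hs
  set t := Real.sqrt δ / Real.sqrt (1 - a ^ 2) with ht
  have hs2 : s ^ 2 = 1 - δ := Real.sq_sqrt (by linarith)
  have ht1 : t * (1 - a ^ 2) = Real.sqrt δ * Real.sqrt (1 - a ^ 2) := by
    rcases eq_or_lt_of_le h1a2 with h | h
    · rw [← h]; simp
    · have hne : Real.sqrt (1 - a ^ 2) ≠ 0 := by positivity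
      rw [ht]
      field_simp
      rw [show Real.sqrt δ * (1 - a^2) = Real.sqrt δ * (Real.sqrt (1-a^2) * Real.sqrt (1-a^2)) by
        rw [Real.mul_self_sqrt h1a2]]
      ring
  have ht2 : t ^ 2 * (1 - a ^ 2) ≤ δ := by
    rcases eq_or_lt_of_le h1a2 with h | h
    · rw [← h]; simpa using hδ0
    · have heq : t ^ 2 * (1 - a ^ 2) = δ := by
        rw [ht, div_pow, Real.sq_sqrt hδ0, Real.sq_sqrt h1a2]
        field_simp
      linarith
  -- phase-adjusted φ
  set u : ℂ := starRingEnd ℂ g / (a : ℂ) with hu'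
  have hucon : starRingEnd ℂ u = g / (a : ℂ) := by
    rw [hu', map_div₀, Complex.conj_conj, Complex.conj_ofReal]
  have hu : starRingEnd ℂ u * u = 1 := by
    rw [hucon, hu']
    field_simp
    linear_combination hgg
  set φ' : Fin d → ℂ := u • φ with hφ'
  have h1 : star ψ ⬝ᵥ φ' = ((a : ℝ) : ℂ) := by
    rw [hφ', dotProduct_smul, ← hg, smul_eq_mul, hu']
    field_simp
    linear_combination hgg
  have h2 : star φ' ⬝ᵥ ψ = ((a : ℝ) : ℂ) := by
    rw [← conj_dot, h1, Complex.conj_ofReal]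
  have hstarφ' : star φ' = starRingEnd ℂ u • star φ := by
    rw [hφ', star_smul, Complex.star_def]
  have h3 : star φ' ⬝ᵥ φ' = 1 := by
    rw [hφ', hstarφ', smul_dotProduct, dotProduct_smul, hφ]
    simp only [smul_eq_mul, mul_one]
    exact hu
  -- the optimal vector
  set m' : ℝ := (s + t * a) * a - t with hm'
  have hmm : m' = a * s - Real.sqrt (1 - a ^ 2) * Real.sqrt δ := by
    rw [hm']
    linear_combination -ht1
  set χ : Fin d → ℂ := ((s + t * a : ℝ) : ℂ) • ψ - ((t : ℝ) : ℂ) • φ' with hχ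
  have Dψχ : star ψ ⬝ᵥ χ = ((s : ℝ) : ℂ) := by
    rw [hχ, dotProduct_sub, dotProduct_smul, dotProduct_smul, hψ, h1]
    simp only [smul_eq_mul]
    push_cast
    ring
  have Dφ'χ : star φ' ⬝ᵥ χ = ((m' : ℝ) : ℂ) := by
    rw [hχ, dotProduct_sub, dotProduct_smul, dotProduct_smul, h2, h3, hm']
    simp only [smul_eq_mul]
    push_cast
    ring
  have hstarχ : star χ = ((s + t * a : ℝ) : ℂ) • star ψ - ((t : ℝ) : ℂ) • star φ' := by
    rw [hχ, star_sub, star_smul, star_smul]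
    simp [Complex.star_def, Complex.conj_ofReal]
  have Dχχ : star χ ⬝ᵥ χ = ((s ^ 2 + t ^ 2 * (1 - a ^ 2) : ℝ) : ℂ) := by
    rw [hstarχ, sub_dotProduct, smul_dotProduct, smul_dotProduct, Dψχ, Dφ'χ, hm']
    simp only [smul_eq_mul]
    push_cast
    ring
  have Dχχ1 : (star χ ⬝ᵥ χ).re ≤ 1 := by
    rw [Dχχ, Complex.ofReal_re, hs2]
    linarith
  refine ⟨Matrix.vecMulVec χ (star χ), vecMulVec_psd χ, one_sub_vecMulVec_psd χ Dχχ1, ?_, ?_⟩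
  · rw [quad_form, Dψχ,
      show star χ ⬝ᵥ ψ = starRingEnd ℂ (star ψ ⬝ᵥ χ) from (conj_dot ψ χ).symm, Dψχ,
      Complex.conj_ofReal, ← Complex.ofReal_mul, Complex.ofReal_re]
    nlinarith [hs2]
  · -- objective value
    rw [quad_form]
    set z : ℂ := star φ ⬝ᵥ χ with hz'
    have hχφ : star χ ⬝ᵥ φ = starRingEnd ℂ z := (conj_dot φ χ).symm
    have huz : starRingEnd ℂ u * z = ((m' : ℝ) : ℂ) := by
      have : star φ' ⬝ᵥ χ = starRingEnd ℂ u * z := by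
        rw [hstarφ', smul_dotProduct, smul_eq_mul, hz']
      rw [← this, Dφ'χ]
    have huz' : u * starRingEnd ℂ z = ((m' : ℝ) : ℂ) := by
      have := congrArg (starRingEnd ℂ) huz
      rwa [_root_.map_mul, Complex.conj_conj, Complex.conj_ofReal] at this
    have : z * starRingEnd ℂ z = ((m' ^ 2 : ℝ) : ℂ) := by
      calc z * starRingEnd ℂ z = (starRingEnd ℂ u * u) * (z * starRingEnd ℂ z) := by
            rw [hu, one_mul]
      _ = (starRingEnd ℂ u * z) * (u * starRingEnd ℂ z) := by ring
      _ = ((m' : ℝ) : ℂ) * ((m' : ℝ) : ℂ) := by rw [huz, huz']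
      _ = ((m' ^ 2 : ℝ) : ℂ) := by push_cast; ring
    rw [hχφ, this, Complex.ofReal_re, hmm, hs]
    try ring

lemma scalar_key (a δ p q : ℝ) (hδ0 : 0 ≤ δ) (hδ1 : δ ≤ 1) (ha : Real.sqrt δ < a)
    (hq0 : 0 ≤ q) (hq1 : q ≤ 1) (hp : 1 - δ ≤ p) (hp1 : p ≤ 1)
    (hcs : a ≤ Real.sqrt (p * q) + Real.sqrt ((1 - p) * (1 - q))) :
    (a * Real.sqrt (1 - δ) - Real.sqrt (1 - a ^ 2) * Real.sqrt δ) ^ 2 ≤ q := by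
  have hp0 : 0 ≤ p := le_trans (by linarith) hp
  have hp1' : 0 ≤ 1 - p := by linarith
  have hq1' : 0 ≤ 1 - q := by linarith
  have ha0 : 0 ≤ a := le_trans (Real.sqrt_nonneg δ) ha.le
  set sp := Real.sqrt p with hsp'
  set sq := Real.sqrt q with hsq'
  set tp := Real.sqrt (1 - p) with htp'
  set tq := Real.sqrt (1 - q) with htq'
  have hsp : sp ^ 2 = p := Real.sq_sqrt hp0
  have hsq : sq ^ 2 = q := Real.sq_sqrt hq0
  have htp : tp ^ 2 = 1 - p := Real.sq_sqrt hp1'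
  have htq : tq ^ 2 = 1 - q := Real.sq_sqrt hq1'
  have hsp0 : 0 ≤ sp := Real.sqrt_nonneg _
  have hsq0 : 0 ≤ sq := Real.sqrt_nonneg _
  have htp0 : 0 ≤ tp := Real.sqrt_nonneg _
  have htq0 : 0 ≤ tq := Real.sqrt_nonneg _
  have hXe : Real.sqrt (p * q) = sp * sq := Real.sqrt_mul hp0 q
  have hYe : Real.sqrt ((1 - p) * (1 - q)) = tp * tq := Real.sqrt_mul hp1' _
  rw [hXe, hYe] at hcs
  set Z := tq * sp - sq * tp with hZ
  have hid1 : (sp * sq + tp * tq) ^ 2 + Z ^ 2 = 1 := by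
    rw [hZ]
    linear_combination (sq^2+tq^2)*hsp + (sq^2+tq^2)*htp + hsq + htq
  have hid2 : sq = (sp * sq + tp * tq) * sp - Z * tp := by
    rw [hZ]
    linear_combination (-sq) * hsp + (-sq) * htp
  have hZsq : Z ^ 2 ≤ 1 - a ^ 2 := by
    have h := pow_le_pow_left₀ ha0 hcs 2
    linarith [hid1]
  have hZle : Z ≤ Real.sqrt (1 - a ^ 2) := by
    calc Z ≤ |Z| := le_abs_self Z
    _ = Real.sqrt (Z ^ 2) := (Real.sqrt_sq_eq_abs Z).symm
    _ ≤ Real.sqrt (1 - a ^ 2) := Real.sqrt_le_sqrt hZsq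
  have hsqp : Real.sqrt (1 - δ) ≤ sp := Real.sqrt_le_sqrt hp
  have hsq1p : tp ≤ Real.sqrt δ := Real.sqrt_le_sqrt (by linarith)
  have hstep : a * Real.sqrt (1 - δ) - Real.sqrt (1 - a ^ 2) * Real.sqrt δ ≤ sq := by
    rw [hid2]
    have h1 : a * Real.sqrt (1 - δ) ≤ (sp * sq + tp * tq) * sp :=
      mul_le_mul hcs hsqp (Real.sqrt_nonneg _) (by positivity)
    have h2 : Z * tp ≤ Real.sqrt (1 - a ^ 2) * Real.sqrt δ := by
      have h3 : Z * tp ≤ Real.sqrt (1 - a ^ 2) * tp :=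
        mul_le_mul_of_nonneg_right hZle htp0
      have h4 : Real.sqrt (1 - a ^ 2) * tp ≤ Real.sqrt (1 - a ^ 2) * Real.sqrt δ :=
        mul_le_mul_of_nonneg_left hsq1p (Real.sqrt_nonneg _)
      linarith
    linarith
  have hm0 : 0 ≤ a * Real.sqrt (1 - δ) - Real.sqrt (1 - a ^ 2) * Real.sqrt δ := by
    have hS0 : 0 ≤ sp * sq + tp * tq := by positivity
    have hS1 : (sp * sq + tp * tq) ^ 2 ≤ 1 := by linarith [sq_nonneg Z, hid1]
    have hS2 : sp * sq + tp * tq ≤ 1 := (pow_le_one_iff_of_nonneg hS0 two_ne_zero).1 hS1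
    have ha1 : a ≤ 1 := le_trans hcs hS2
    have haa : δ * (1 - a ^ 2) ≤ a ^ 2 * (1 - δ) := by
      have hda : δ < a ^ 2 := by
        have h := pow_lt_pow_left₀ ha (Real.sqrt_nonneg δ) two_ne_zero
        rwa [Real.sq_sqrt hδ0] at h
      linarith
    have e5 : Real.sqrt (1 - a ^ 2) * Real.sqrt δ = Real.sqrt (δ * (1 - a ^ 2)) := by
      rw [Real.sqrt_mul hδ0]; ring
    have e6 : a * Real.sqrt (1 - δ) = Real.sqrt (a ^ 2 * (1 - δ)) := by
      rw [Real.sqrt_mul (by positivity), Real.sqrt_sq ha0]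
    rw [e5, e6, sub_nonneg]
    exact Real.sqrt_le_sqrt haa
  calc (a * Real.sqrt (1 - δ) - Real.sqrt (1 - a ^ 2) * Real.sqrt δ) ^ 2 ≤ sq ^ 2 := pow_le_pow_left₀ hm0 hstep 2
  _ = q := hsq
open Matrix
open scoped ComplexOrder

open scoped MatrixOrder in
lemma psd_cs {d : ℕ} {Ω : Matrix (Fin d) (Fin d) ℂ} (h : Ω.PosSemidef) (x y : Fin d → ℂ) :
    ‖star x ⬝ᵥ (Ω *ᵥ y)‖ ≤
      Real.sqrt (star x ⬝ᵥ (Ω *ᵥ x)).re * Real.sqrt (star y ⬝ᵥ (Ω *ᵥ y)).re := by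
  obtain ⟨B, rfl⟩ := CStarAlgebra.nonneg_iff_eq_star_mul_self.mp h.nonneg
  rw [Matrix.star_eq_conjTranspose]
  have key : ∀ u v : Fin d → ℂ,
      star u ⬝ᵥ ((Bᴴ * B) *ᵥ v) = star (B *ᵥ u) ⬝ᵥ (B *ᵥ v) := fun u v => by
    rw [← Matrix.mulVec_mulVec, Matrix.dotProduct_mulVec, Matrix.star_mulVec]
  rw [key x y, key x x, key y y]
  exact dot_cs (B *ᵥ x) (B *ᵥ y)

lemma lower_bound {d : ℕ} (ψ φ : Fin d → ℂ) (δ a : ℝ)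
    (hψ : star ψ ⬝ᵥ ψ = 1) (hφ : star φ ⬝ᵥ φ = 1)
    (hδ : δ ∈ Set.Icc (0 : ℝ) 1)
    (ha : a = ‖star ψ ⬝ᵥ φ‖)
    (hover : Real.sqrt δ < a)
    (Ω : Matrix (Fin d) (Fin d) ℂ) (hΩ : Ω.PosSemidef) (hΩ' : (1 - Ω).PosSemidef)
    (hcon : 1 - δ ≤ (star ψ ⬝ᵥ (Ω *ᵥ ψ)).re) :
    (a * Real.sqrt (1 - δ) - Real.sqrt (1 - a ^ 2) * Real.sqrt δ) ^ 2 ≤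
      (star φ ⬝ᵥ (Ω *ᵥ φ)).re := by
  set p := (star ψ ⬝ᵥ (Ω *ᵥ ψ)).re with hp'
  set q := (star φ ⬝ᵥ (Ω *ᵥ φ)).re with hq'
  have hq0 : 0 ≤ q := by
    have := hΩ.re_dotProduct_nonneg φ
    simpa using this
  have hp0 : 0 ≤ p := by
    have := hΩ.re_dotProduct_nonneg ψ
    simpa using this
  have hsub : ∀ x y : Fin d → ℂ,
      star x ⬝ᵥ ((1 - Ω) *ᵥ y) = star x ⬝ᵥ y - star x ⬝ᵥ (Ω *ᵥ y) := fun x y => by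
    rw [Matrix.sub_mulVec, Matrix.one_mulVec, dotProduct_sub]
  have h1q : (star φ ⬝ᵥ ((1 - Ω) *ᵥ φ)).re = 1 - q := by
    rw [hsub, hφ, Complex.sub_re, Complex.one_re]
  have h1p : (star ψ ⬝ᵥ ((1 - Ω) *ᵥ ψ)).re = 1 - p := by
    rw [hsub, hψ, Complex.sub_re, Complex.one_re]
  have hq1 : q ≤ 1 := by
    have := hΩ'.re_dotProduct_nonneg φ
    simp only [RCLike.re_to_complex] at this
    rw [h1q] at this; linarith
  have hp1 : p ≤ 1 := by
    have := hΩ'.re_dotProduct_nonneg ψ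
    simp only [RCLike.re_to_complex] at this
    rw [h1p] at this; linarith
  have hdec : star ψ ⬝ᵥ φ = star ψ ⬝ᵥ (Ω *ᵥ φ) + star ψ ⬝ᵥ ((1 - Ω) *ᵥ φ) := by
    rw [hsub]; ring
  have htri : a ≤ ‖star ψ ⬝ᵥ (Ω *ᵥ φ)‖ +
      ‖star ψ ⬝ᵥ ((1 - Ω) *ᵥ φ)‖ := by
    rw [ha, hdec]
    exact norm_add_le _ _
  have hcs1 := psd_cs hΩ ψ φ
  have hcs2 := psd_cs hΩ' ψ φ
  rw [h1p, h1q] at hcs2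
  have hcs : a ≤ Real.sqrt (p * q) + Real.sqrt ((1 - p) * (1 - q)) := by
    rw [Real.sqrt_mul hp0, Real.sqrt_mul (by linarith : (0:ℝ) ≤ 1 - p)]
    calc a ≤ _ := htri
    _ ≤ _ := add_le_add hcs1 hcs2
  exact scalar_key a δ p q hδ.1 hδ.2 hover hq0 hq1 hcon hp1 hcs

theorem stmt1 {d : ℕ} (ψ φ : Fin d → ℂ) (δ a : ℝ)
    (hψ : star ψ ⬝ᵥ ψ = 1) (hφ : star φ ⬝ᵥ φ = 1)
    (hδ : δ ∈ Set.Icc (0 : ℝ) 1)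
    (ha : a = ‖star ψ ⬝ᵥ φ‖)
    (hover : Real.sqrt δ < a) :
    IsLeast {x : ℝ | ∃ Ω : Matrix (Fin d) (Fin d) ℂ, Ω.PosSemidef ∧ (1 - Ω).PosSemidef ∧
        1 - δ ≤ (star ψ ⬝ᵥ (Ω *ᵥ ψ)).re ∧ x = (star φ ⬝ᵥ (Ω *ᵥ φ)).re}
      ((a * Real.sqrt (1 - δ) - Real.sqrt (1 - a ^ 2) * Real.sqrt δ) ^ 2) := by
  constructor
  · obtain ⟨Ω, h1, h2, h3, h4⟩ := membership ψ φ δ a hψ hφ hδ ha hover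
    exact ⟨Ω, h1, h2, h3, h4⟩
  · rintro x ⟨Ω, h1, h2, h3, rfl⟩
    exact lower_bound ψ φ δ a hψ hφ hδ ha hover Ω h1 h2 h3
end

section
/- Let U ∈ U(d) be unitary and δ ∈ [0,1]. The quantity min over unit ψ of the minimized type II error for certifying states ψ versus Uψ with significance δ equals: 0 if ν(U) ≤ √δ, and (ν(U)√(1−δ) − √(1−ν(U)²)√δ)² if ν(U) > √δ, where ν(U) = min over unit ψ of |⟨ψ|U|ψ⟩|. -/
open Matrix
open scoped ComplexOrder

namespace Stmt8Aux

variable {d : ℕ}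

lemma cs_dot (u v : Fin d → ℂ) :
    ‖star u ⬝ᵥ v‖ ^ 2 ≤ (star u ⬝ᵥ u).re * (star v ⬝ᵥ v).re := by
  have h : ∀ a b : Fin d → ℂ,
      (inner ℂ ((WithLp.equiv 2 (Fin d → ℂ)).symm a) ((WithLp.equiv 2 (Fin d → ℂ)).symm b) : ℂ)
        = star a ⬝ᵥ b := by
    intro a b; rw [EuclideanSpace.inner_eq_star_dotProduct]; simp [dotProduct_comm]
  set x := (WithLp.equiv 2 (Fin d → ℂ)).symm u
  set y := (WithLp.equiv 2 (Fin d → ℂ)).symm v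
  have h1 : ‖star u ⬝ᵥ v‖ ≤ ‖x‖ * ‖y‖ := by
    rw [← h u v]; exact norm_inner_le_norm (𝕜 := ℂ) x y
  have h2 : (star u ⬝ᵥ u).re = ‖x‖ ^ 2 := by
    rw [← h u u]; simpa [x] using inner_self_eq_norm_sq (𝕜 := ℂ) x
  have h3 : (star v ⬝ᵥ v).re = ‖y‖ ^ 2 := by
    rw [← h v v]; simpa [y] using inner_self_eq_norm_sq (𝕜 := ℂ) y
  rw [h2, h3]
  calc ‖star u ⬝ᵥ v‖ ^ 2 ≤ (‖x‖ * ‖y‖) ^ 2 := by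
        apply pow_le_pow_left₀ (norm_nonneg _) h1
    _ = ‖x‖^2 * ‖y‖^2 := by ring

open scoped MatrixOrder in
lemma cs_psd {M : Matrix (Fin d) (Fin d) ℂ} (hM : M.PosSemidef) (u v : Fin d → ℂ) :
    ‖star u ⬝ᵥ (M *ᵥ v)‖ ^ 2 ≤ (star u ⬝ᵥ (M *ᵥ u)).re * (star v ⬝ᵥ (M *ᵥ v)).re := by
  obtain ⟨B, rfl⟩ := CStarAlgebra.nonneg_iff_eq_star_mul_self.mp hM.nonneg
  have key : ∀ a b : Fin d → ℂ, star a ⬝ᵥ ((Bᴴ * B) *ᵥ b) = star (B *ᵥ a) ⬝ᵥ (B *ᵥ b) := by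
    intro a b
    rw [← Matrix.mulVec_mulVec, Matrix.star_mulVec, ← Matrix.dotProduct_mulVec]
  rw [show star B = Bᴴ from rfl, key, key, key]; exact cs_dot _ _

lemma psd_re_nonneg {M : Matrix (Fin d) (Fin d) ℂ} (hM : M.PosSemidef) (x : Fin d → ℂ) :
    0 ≤ (star x ⬝ᵥ (M *ᵥ x)).re := by
  have := hM.dotProduct_mulVec_nonneg x
  rw [Complex.le_def] at this
  simpa using this.1

lemma conj_dot (x w : Fin d → ℂ) : star x ⬝ᵥ w = starRingEnd ℂ (star w ⬝ᵥ x) := by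
  simp [dotProduct, map_sum, mul_comm]

lemma dot_self_im (x : Fin d → ℂ) : (star x ⬝ᵥ x).im = 0 := by
  simp [dotProduct, Complex.im_sum, Complex.mul_im]
  ring_nf
  simp [mul_comm]

lemma dot_self_nonneg (x : Fin d → ℂ) : 0 ≤ (star x ⬝ᵥ x).re := by
  have h : star x ⬝ᵥ x = ((∑ i, Complex.normSq (x i) : ℝ) : ℂ) := by
    simp [dotProduct, Complex.normSq_eq_conj_mul_self]
  rw [h]
  rw [Complex.ofReal_re]
  exact Finset.sum_nonneg fun i _ => Complex.normSq_nonneg _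

lemma mulVec_vecMulVec (w x : Fin d → ℂ) :
    vecMulVec w (star w) *ᵥ x = (star w ⬝ᵥ x) • w := by
  funext i
  simp [vecMulVec, mulVec, dotProduct, Finset.mul_sum, mul_comm, mul_assoc, mul_left_comm]

lemma quad_vecMulVec (w x : Fin d → ℂ) :
    star x ⬝ᵥ (vecMulVec w (star w) *ᵥ x) = (Complex.normSq (star w ⬝ᵥ x) : ℂ) := by
  rw [mulVec_vecMulVec, dotProduct_smul]
  rw [conj_dot x w, smul_eq_mul, Complex.mul_conj]

lemma herm_vecMulVec (w : Fin d → ℂ) : (vecMulVec w (star w)).IsHermitian := by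
  unfold Matrix.IsHermitian
  ext i j
  simp [vecMulVec, conjTranspose, mul_comm]

lemma psd_vecMulVec (w : Fin d → ℂ) : (vecMulVec w (star w)).PosSemidef := by
  refine Matrix.PosSemidef.of_dotProduct_mulVec_nonneg (herm_vecMulVec w) fun x => ?_
  rw [quad_vecMulVec]
  rw [Complex.le_def]
  constructor
  · simpa using Complex.normSq_nonneg _
  · simp

lemma psd_one_sub_vecMulVec {w : Fin d → ℂ} (hw : (star w ⬝ᵥ w).re ≤ 1) :
    ((1 : Matrix (Fin d) (Fin d) ℂ) - vecMulVec w (star w)).PosSemidef := by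
  refine Matrix.PosSemidef.of_dotProduct_mulVec_nonneg ?_ ?_
  · unfold Matrix.IsHermitian
    rw [conjTranspose_sub, (herm_vecMulVec w)]
    simp
  · intro x
    rw [sub_mulVec, one_mulVec, dotProduct_sub, quad_vecMulVec]
    have h1 : Complex.normSq (star w ⬝ᵥ x) ≤ (star x ⬝ᵥ x).re := by
      rw [Complex.normSq_eq_norm_sq]
      calc ‖star w ⬝ᵥ x‖ ^ 2
          ≤ (star w ⬝ᵥ w).re * (star x ⬝ᵥ x).re := cs_dot w x
        _ ≤ 1 * (star x ⬝ᵥ x).re :=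
            mul_le_mul_of_nonneg_right hw (dot_self_nonneg x)
        _ = (star x ⬝ᵥ x).re := one_mul _
    rw [Complex.le_def]
    constructor
    · simp only [Complex.sub_re, Complex.ofReal_re, Complex.zero_re]
      linarith
    · simp [Complex.sub_im, dot_self_im]

lemma abs_le_sqrt_psd {M : Matrix (Fin d) (Fin d) ℂ} (hM : M.PosSemidef) (u v : Fin d → ℂ) :
    ‖star u ⬝ᵥ (M *ᵥ v)‖ ≤
      Real.sqrt ((star u ⬝ᵥ (M *ᵥ u)).re * (star v ⬝ᵥ (M *ᵥ v)).re) := by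
  apply (Real.le_sqrt (norm_nonneg _)
    (mul_nonneg (psd_re_nonneg hM u) (psd_re_nonneg hM v))).mpr
  exact cs_psd hM u v

lemma key_ineq {Ω : Matrix (Fin d) (Fin d) ℂ} (hΩ : Ω.PosSemidef) (hΩ' : (1 - Ω).PosSemidef)
    (ψ φ : Fin d → ℂ) :
    ‖star ψ ⬝ᵥ φ‖ ≤
      Real.sqrt ((star ψ ⬝ᵥ (Ω *ᵥ ψ)).re * (star φ ⬝ᵥ (Ω *ᵥ φ)).re)
      + Real.sqrt ((star ψ ⬝ᵥ ((1-Ω) *ᵥ ψ)).re * (star φ ⬝ᵥ ((1-Ω) *ᵥ φ)).re) := by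
  have split : star ψ ⬝ᵥ φ = star ψ ⬝ᵥ (Ω *ᵥ φ) + star ψ ⬝ᵥ ((1-Ω) *ᵥ φ) := by
    rw [← dotProduct_add, ← Matrix.add_mulVec, add_sub_cancel, one_mulVec]
  calc ‖star ψ ⬝ᵥ φ‖
      ≤ ‖star ψ ⬝ᵥ (Ω *ᵥ φ)‖ + ‖star ψ ⬝ᵥ ((1-Ω) *ᵥ φ)‖ := by
        rw [split]; exact norm_add_le _ _
    _ ≤ _ := add_le_add (abs_le_sqrt_psd hΩ ψ φ) (abs_le_sqrt_psd hΩ' ψ φ)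

lemma alg1 {ν a b : ℝ} (hν0 : 0 ≤ ν) (hν1 : ν ≤ 1) (ha0 : 0 ≤ a) (ha1 : a ≤ 1)
    (hb0 : 0 ≤ b) (hb1 : b ≤ 1)
    (h : ν ≤ Real.sqrt (a*b) + Real.sqrt ((1-a)*(1-b))) :
    ν * Real.sqrt a - Real.sqrt (1-ν^2) * Real.sqrt (1-a) ≤ Real.sqrt b := by
  have ha1' : 0 ≤ 1 - a := by linarith
  have hb1' : 0 ≤ 1 - b := by linarith
  have hm' : 0 ≤ 1 - ν^2 := by nlinarith
  rw [Real.sqrt_mul ha0, Real.sqrt_mul ha1'] at h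
  set p := Real.sqrt a with hpdef
  set q := Real.sqrt b with hqdef
  set r := Real.sqrt (1-a) with hrdef
  set s := Real.sqrt (1-b) with hsdef
  set m := Real.sqrt (1-ν^2) with hmdef
  have hp0 : 0 ≤ p := Real.sqrt_nonneg _
  have hq0 : 0 ≤ q := Real.sqrt_nonneg _
  have hr0 : 0 ≤ r := Real.sqrt_nonneg _
  have hs0 : 0 ≤ s := Real.sqrt_nonneg _
  have hm0 : 0 ≤ m := Real.sqrt_nonneg _
  have hp : p^2 = a := Real.sq_sqrt ha0
  have hq : q^2 = b := Real.sq_sqrt hb0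
  have hr : r^2 = 1-a := Real.sq_sqrt ha1'
  have hs : s^2 = 1-b := Real.sq_sqrt hb1'
  have hm : m^2 = 1-ν^2 := Real.sq_sqrt hm'
  have hsq : ν^2 ≤ (p*q + r*s)^2 := by
    nlinarith [mul_nonneg (sub_nonneg.mpr h)
      (add_nonneg (add_nonneg (mul_nonneg hp0 hq0) (mul_nonneg hr0 hs0)) hν0)]
  have hkey : (p*s - r*q)^2 ≤ m^2 := by nlinarith
  have hx : p*s - r*q ≤ m := by nlinarith
  nlinarith [mul_le_mul_of_nonneg_left h hp0, mul_le_mul_of_nonneg_left hx hr0]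

lemma sqrt_term_eq {t δ : ℝ} (ht0 : 0 ≤ t) (ht1 : t ≤ 1) (hδ0 : 0 ≤ δ) (hδ1 : δ ≤ 1) :
    t * Real.sqrt (1-δ) = Real.sqrt (t^2 * (1-δ)) ∧
    Real.sqrt (1-t^2) * Real.sqrt δ = Real.sqrt ((1-t^2) * δ) := by
  constructor
  · rw [Real.sqrt_mul (by positivity), Real.sqrt_sq ht0]
  · rw [Real.sqrt_mul (by nlinarith)]

lemma L_nonneg {t δ : ℝ} (ht : Real.sqrt δ < t) (ht1 : t ≤ 1) (hδ0 : 0 ≤ δ) (hδ1 : δ ≤ 1) :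
    0 ≤ t * Real.sqrt (1-δ) - Real.sqrt (1-t^2) * Real.sqrt δ := by
  have ht0 : 0 ≤ t := le_of_lt (lt_of_le_of_lt (Real.sqrt_nonneg δ) ht)
  have ht2 : δ ≤ t^2 := by
    have := Real.sq_sqrt hδ0
    nlinarith [Real.sqrt_nonneg δ]
  obtain ⟨e1, e2⟩ := sqrt_term_eq ht0 ht1 hδ0 hδ1
  rw [e1, e2, sub_nonneg]
  apply Real.sqrt_le_sqrt
  nlinarith

lemma L_nonpos {t δ : ℝ} (ht : t ≤ Real.sqrt δ) (ht0 : 0 ≤ t) (ht1 : t ≤ 1)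
    (hδ0 : 0 ≤ δ) (hδ1 : δ ≤ 1) :
    t * Real.sqrt (1-δ) - Real.sqrt (1-t^2) * Real.sqrt δ ≤ 0 := by
  have ht2 : t^2 ≤ δ := by
    have := Real.sq_sqrt hδ0
    nlinarith [Real.sqrt_nonneg δ]
  obtain ⟨e1, e2⟩ := sqrt_term_eq ht0 ht1 hδ0 hδ1
  rw [e1, e2, sub_nonpos]
  apply Real.sqrt_le_sqrt
  nlinarith

lemma unit_mulVec {U : Matrix (Fin d) (Fin d) ℂ} (hU : U ∈ Matrix.unitaryGroup (Fin d) ℂ)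
    {ψ : Fin d → ℂ} (hψ : star ψ ⬝ᵥ ψ = 1) : star (U *ᵥ ψ) ⬝ᵥ (U *ᵥ ψ) = 1 := by
  rw [Matrix.star_mulVec, ← Matrix.dotProduct_mulVec, Matrix.mulVec_mulVec]
  rw [show Uᴴ * U = 1 from by simpa [Matrix.star_eq_conjTranspose] using hU.1]
  rw [one_mulVec, hψ]

-- typeI rewriting helper
lemma typeI_eq {Ω : Matrix (Fin d) (Fin d) ℂ} (x : Fin d → ℂ) :
    star x ⬝ᵥ ((1 - Ω) *ᵥ x) = star x ⬝ᵥ x - star x ⬝ᵥ (Ω *ᵥ x) := by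
  rw [sub_mulVec, one_mulVec, dotProduct_sub]

/-- construction for `ν² ≤ δ` : value 0 -/
lemma constr0 {U : Matrix (Fin d) (Fin d) ℂ} (hU : U ∈ Matrix.unitaryGroup (Fin d) ℂ)
    {δ : ℝ} {ψ : Fin d → ℂ} (hψ : star ψ ⬝ᵥ ψ = 1)
    (hν : ‖star ψ ⬝ᵥ (U *ᵥ ψ)‖ ^ 2 ≤ δ) :
    ∃ Ω : Matrix (Fin d) (Fin d) ℂ, Ω.PosSemidef ∧ (1 - Ω).PosSemidef ∧
      (star ψ ⬝ᵥ ((1 - Ω) *ᵥ ψ)).re ≤ δ ∧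
      (star (U *ᵥ ψ) ⬝ᵥ (Ω *ᵥ (U *ᵥ ψ))).re = 0 := by
  set φ := U *ᵥ ψ with hφ
  have hφφ : star φ ⬝ᵥ φ = 1 := unit_mulVec hU hψ
  set W := vecMulVec φ (star φ) with hW
  have hsub : (1 : Matrix (Fin d) (Fin d) ℂ) - (1 - W) = W := sub_sub_cancel 1 W
  refine ⟨1 - W, psd_one_sub_vecMulVec (by rw [hφφ]; simp), by rw [hsub]; exact psd_vecMulVec φ, ?_, ?_⟩
  · rw [hsub, quad_vecMulVec, Complex.ofReal_re, Complex.normSq_eq_norm_sq]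
    rw [conj_dot ψ φ, Complex.norm_conj] at hν
    exact hν
  · rw [typeI_eq, quad_vecMulVec, hφφ]
    simp [Complex.normSq_eq_norm_sq]

/-- trivial construction: value 1 (for nonemptiness) -/
lemma constr1 {U : Matrix (Fin d) (Fin d) ℂ} (hU : U ∈ Matrix.unitaryGroup (Fin d) ℂ)
    {δ : ℝ} (hδ0 : 0 ≤ δ) {ψ : Fin d → ℂ} (hψ : star ψ ⬝ᵥ ψ = 1) :
    ∃ Ω : Matrix (Fin d) (Fin d) ℂ, Ω.PosSemidef ∧ (1 - Ω).PosSemidef ∧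
      (star ψ ⬝ᵥ ((1 - Ω) *ᵥ ψ)).re ≤ δ ∧
      (star (U *ᵥ ψ) ⬝ᵥ (Ω *ᵥ (U *ᵥ ψ))).re = 1 := by
  refine ⟨1, Matrix.PosSemidef.one, by simpa using (Matrix.PosSemidef.zero (n := Fin d) (R := ℂ)), ?_, ?_⟩
  · simp [typeI_eq, hψ, hδ0]
  · rw [one_mulVec, unit_mulVec hU hψ]
    simp

/-- main construction: value `(ν √(1-δ) - √(1-ν²) √δ)²` when `√δ < ν` -/
lemma constr2 {U : Matrix (Fin d) (Fin d) ℂ} (hU : U ∈ Matrix.unitaryGroup (Fin d) ℂ)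
    {δ : ℝ} (hδ0 : 0 ≤ δ) (hδ1 : δ ≤ 1) {ψ : Fin d → ℂ} (hψ : star ψ ⬝ᵥ ψ = 1)
    (hν : Real.sqrt δ < ‖star ψ ⬝ᵥ (U *ᵥ ψ)‖)
    (hν1 : ‖star ψ ⬝ᵥ (U *ᵥ ψ)‖ ≤ 1) :
    ∃ Ω : Matrix (Fin d) (Fin d) ℂ, Ω.PosSemidef ∧ (1 - Ω).PosSemidef ∧
      (star ψ ⬝ᵥ ((1 - Ω) *ᵥ ψ)).re ≤ δ ∧
      (star (U *ᵥ ψ) ⬝ᵥ (Ω *ᵥ (U *ᵥ ψ))).re =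
        (‖star ψ ⬝ᵥ (U *ᵥ ψ)‖ * Real.sqrt (1-δ)
          - Real.sqrt (1 - ‖star ψ ⬝ᵥ (U *ᵥ ψ)‖^2) * Real.sqrt δ)^2 := by
  set φ := U *ᵥ ψ with hφdef
  have hφφ : star φ ⬝ᵥ φ = 1 := unit_mulVec hU hψ
  set c := star ψ ⬝ᵥ φ with hcdef
  set ν := ‖c‖ with hνdef
  have hφψ : star φ ⬝ᵥ ψ = starRingEnd ℂ c := by rw [conj_dot, hcdef]
  have hν0 : 0 < ν := lt_of_le_of_lt (Real.sqrt_nonneg δ) hν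
  have hcc : starRingEnd ℂ c * c = ((ν^2 : ℝ) : ℂ) := by
    rw [← Complex.normSq_eq_conj_mul_self, Complex.normSq_eq_norm_sq]
  have hα2 : Real.sqrt (1-δ) * Real.sqrt (1-δ) = 1 - δ := Real.mul_self_sqrt (by linarith)
  -- we produce ω with the needed three dot product values
  suffices hsuff : ∃ ω : Fin d → ℂ, (star ω ⬝ᵥ ω).re ≤ 1 ∧
      Complex.normSq (star ω ⬝ᵥ ψ) = 1 - δ ∧
      Complex.normSq (star ω ⬝ᵥ φ) = (ν * Real.sqrt (1-δ) - Real.sqrt (1-ν^2) * Real.sqrt δ)^2 by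
    obtain ⟨ω, hω1, hω2, hω3⟩ := hsuff
    refine ⟨vecMulVec ω (star ω), psd_vecMulVec ω, psd_one_sub_vecMulVec hω1, ?_, ?_⟩
    · rw [typeI_eq, quad_vecMulVec, hψ, Complex.sub_re, Complex.one_re, Complex.ofReal_re, hω2]
      linarith
    · rw [quad_vecMulVec, Complex.ofReal_re, hω3]
  by_cases hν1' : ν = 1
  · -- ν = 1 : take ω = √(1-δ) • ψ
    have e0 : star (((Real.sqrt (1-δ) : ℝ) : ℂ) • ψ) ⬝ᵥ ψ = ((Real.sqrt (1-δ) : ℝ) : ℂ) := by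
      rw [star_smul, smul_dotProduct, hψ, Complex.star_def, Complex.conj_ofReal, smul_eq_mul,
        mul_one]
    refine ⟨((Real.sqrt (1-δ) : ℝ) : ℂ) • ψ, ?_, ?_, ?_⟩
    · have e1 : star (((Real.sqrt (1-δ) : ℝ) : ℂ) • ψ) ⬝ᵥ (((Real.sqrt (1-δ) : ℝ) : ℂ) • ψ)
          = ((Real.sqrt (1-δ) * Real.sqrt (1-δ) : ℝ) : ℂ) := by
        rw [dotProduct_smul, e0, smul_eq_mul]
        push_cast
        ring
      rw [e1, Complex.ofReal_re, hα2]
      linarith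
    · rw [e0, Complex.normSq_ofReal, hα2]
    · have e2 : star (((Real.sqrt (1-δ) : ℝ) : ℂ) • ψ) ⬝ᵥ φ
          = ((Real.sqrt (1-δ) : ℝ) : ℂ) * c := by
        rw [star_smul, smul_dotProduct, ← hcdef, Complex.star_def, Complex.conj_ofReal,
          smul_eq_mul]
      rw [e2, Complex.normSq_mul, Complex.normSq_ofReal, Complex.normSq_eq_norm_sq, ← hνdef, hν1']
      rw [show (1:ℝ) - 1^2 = 0 by ring, Real.sqrt_zero, hα2]
      linear_combination -hα2
  · -- ν < 1
    have hνlt : ν < 1 := lt_of_le_of_ne hν1 hν1'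
    set s := Real.sqrt (1 - ν^2) with hsdef
    have hs2 : s^2 = 1 - ν^2 := Real.sq_sqrt (by nlinarith)
    have hs0 : 0 < s := Real.sqrt_pos.mpr (by nlinarith)
    have hνC : ((ν:ℝ) : ℂ) ≠ 0 := by exact_mod_cast ne_of_gt hν0
    have hsC : ((s:ℝ) : ℂ) ≠ 0 := by exact_mod_cast ne_of_gt hs0
    set k : ℂ := ((Real.sqrt δ : ℝ) : ℂ) * starRingEnd ℂ c / (((ν:ℝ):ℂ) * ((s:ℝ):ℂ)) with hkdef
    set χ : Fin d → ℂ := φ - c • ψ with hχdef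
    set ω : Fin d → ℂ := ((Real.sqrt (1-δ) : ℝ) : ℂ) • ψ - k • χ with hωdef
    have hkc : starRingEnd ℂ k = ((Real.sqrt δ : ℝ) : ℂ) * c / (((ν:ℝ):ℂ) * ((s:ℝ):ℂ)) := by
      rw [hkdef]
      simp [map_div₀, _root_.map_mul, Complex.conj_ofReal]
    have eψχ : star ψ ⬝ᵥ χ = 0 := by
      simp [hχdef, dotProduct_sub, dotProduct_smul, hψ, ← hcdef, smul_eq_mul]
    have eχψ : star χ ⬝ᵥ ψ = 0 := by
      rw [conj_dot, eψχ, map_zero]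
    have hcc' : starRingEnd ℂ c * c = ((ν:ℝ):ℂ)^2 := by rw [hcc]; push_cast; ring
    have eχφ : star χ ⬝ᵥ φ = ((s^2 : ℝ) : ℂ) := by
      simp only [hχdef, star_sub, star_smul, sub_dotProduct, smul_dotProduct, hφφ, ← hcdef,
        smul_eq_mul, star_trivial, Complex.star_def]
      rw [hs2]
      push_cast
      linear_combination -hcc'
    have eχχ : star χ ⬝ᵥ χ = ((s^2 : ℝ) : ℂ) := by
      rw [hχdef]
      rw [dotProduct_sub, dotProduct_smul, show φ - c • ψ = χ from rfl]
      rw [eχφ, eχψ]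
      simp
    have hωψ : star ω ⬝ᵥ ψ = ((Real.sqrt (1-δ) : ℝ) : ℂ) := by
      simp only [hωdef, star_sub, star_smul, sub_dotProduct, smul_dotProduct, hψ,
        eχψ, smul_eq_mul, Complex.star_def, Complex.conj_ofReal]
      ring
    have hωφ : star ω ⬝ᵥ φ = c * ((Real.sqrt (1-δ) - Real.sqrt δ * s / ν : ℝ) : ℂ) := by
      have e : star ω ⬝ᵥ φ = ((Real.sqrt (1-δ) : ℝ) : ℂ) * c
          - starRingEnd ℂ k * ((s^2 : ℝ):ℂ) := by
        simp only [hωdef, star_sub, star_smul, sub_dotProduct, smul_dotProduct, ← hcdef, eχφ,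
          smul_eq_mul, Complex.star_def, Complex.conj_ofReal]
      rw [e, hkc]
      push_cast
      field_simp
    have hωχ : star ω ⬝ᵥ χ = - starRingEnd ℂ k * ((s^2 : ℝ) : ℂ) := by
      simp only [hωdef, star_sub, star_smul, sub_dotProduct, smul_dotProduct,
        eψχ, eχχ, smul_eq_mul, Complex.star_def, Complex.conj_ofReal]
      ring
    have hωω : star ω ⬝ᵥ ω = 1 := by
      have expand : star ω ⬝ᵥ ω =
          ((Real.sqrt (1-δ) : ℝ) : ℂ) * (star ω ⬝ᵥ ψ) - k * (star ω ⬝ᵥ χ) := by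
        rw [hωdef]
        rw [show ((Real.sqrt (1-δ) : ℝ) : ℂ) • ψ - k • χ = ω from rfl]
        rw [dotProduct_sub, dotProduct_smul, dotProduct_smul, smul_eq_mul, smul_eq_mul]
      have hd1 : ((Real.sqrt δ : ℝ) : ℂ) * ((Real.sqrt δ : ℝ) : ℂ) = ((δ:ℝ) : ℂ) := by
        rw [← Complex.ofReal_mul, Real.mul_self_sqrt hδ0]
      have hd2 : ((Real.sqrt (1-δ) : ℝ) : ℂ) * ((Real.sqrt (1-δ) : ℝ) : ℂ) = ((1-δ:ℝ) : ℂ) := by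
        rw [← Complex.ofReal_mul, hα2]
      have hkk : k * starRingEnd ℂ k * ((s^2 : ℝ) : ℂ) = ((δ : ℝ):ℂ) := by
        rw [hkdef, hkc]
        field_simp
        push_cast
        linear_combination ((((s:ℝ)):ℂ)^2 * (((Real.sqrt δ):ℝ):ℂ)^2) * hcc' + ((((s:ℝ)):ℂ)^2 * (((ν:ℝ)):ℂ)^2) * hd1
      rw [expand, hωψ, hωχ]
      have : ((Real.sqrt (1-δ) : ℝ) : ℂ) * ((Real.sqrt (1-δ) : ℝ) : ℂ)
          - k * (-starRingEnd ℂ k * ((s^2 : ℝ) : ℂ))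
          = ((1-δ:ℝ) : ℂ) + k * starRingEnd ℂ k * ((s^2 : ℝ) : ℂ) := by
        rw [hd2]; ring
      rw [this, hkk]
      push_cast
      ring
    refine ⟨ω, ?_, ?_, ?_⟩
    · rw [hωω]
      simp
    · rw [hωψ, Complex.normSq_ofReal, hα2]
    · rw [hωφ, Complex.normSq_mul, Complex.normSq_ofReal, Complex.normSq_eq_norm_sq, ← hνdef]
      field_simp

end Stmt8Aux

open Stmt8Aux

/-- The distance from the numerical range of `U` to the origin. -/
noncomputable def nu {d : ℕ} (U : Matrix (Fin d) (Fin d) ℂ) : ℝ :=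
  sInf {r : ℝ | ∃ ψ : Fin d → ℂ, star ψ ⬝ᵥ ψ = 1 ∧ r = ‖star ψ ⬝ᵥ (U *ᵥ ψ)‖}

theorem stmt8 {d : ℕ} (U : Matrix (Fin d) (Fin d) ℂ)
    (hU : U ∈ Matrix.unitaryGroup (Fin d) ℂ) (δ : ℝ)
    (hδ : δ ∈ Set.Icc (0 : ℝ) 1) :
    (nu U ≤ Real.sqrt δ →
      sInf {x : ℝ | ∃ (ψ : Fin d → ℂ) (Ω : Matrix (Fin d) (Fin d) ℂ),
          star ψ ⬝ᵥ ψ = 1 ∧ Ω.PosSemidef ∧ (1 - Ω).PosSemidef ∧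
          (star ψ ⬝ᵥ ((1 - Ω) *ᵥ ψ)).re ≤ δ ∧
          x = (star (U *ᵥ ψ) ⬝ᵥ (Ω *ᵥ (U *ᵥ ψ))).re} = 0) ∧
    (Real.sqrt δ < nu U →
      sInf {x : ℝ | ∃ (ψ : Fin d → ℂ) (Ω : Matrix (Fin d) (Fin d) ℂ),
          star ψ ⬝ᵥ ψ = 1 ∧ Ω.PosSemidef ∧ (1 - Ω).PosSemidef ∧
          (star ψ ⬝ᵥ ((1 - Ω) *ᵥ ψ)).re ≤ δ ∧
          x = (star (U *ᵥ ψ) ⬝ᵥ (Ω *ᵥ (U *ᵥ ψ))).re} =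
        (nu U * Real.sqrt (1 - δ) - Real.sqrt (1 - nu U ^ 2) * Real.sqrt δ) ^ 2) := by
  obtain ⟨hδ0, hδ1⟩ := hδ
  set N := {r : ℝ | ∃ ψ : Fin d → ℂ, star ψ ⬝ᵥ ψ = 1 ∧ r = ‖star ψ ⬝ᵥ (U *ᵥ ψ)‖}
    with hNdef
  set S := {x : ℝ | ∃ (ψ : Fin d → ℂ) (Ω : Matrix (Fin d) (Fin d) ℂ),
      star ψ ⬝ᵥ ψ = 1 ∧ Ω.PosSemidef ∧ (1 - Ω).PosSemidef ∧
      (star ψ ⬝ᵥ ((1 - Ω) *ᵥ ψ)).re ≤ δ ∧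
      x = (star (U *ᵥ ψ) ⬝ᵥ (Ω *ᵥ (U *ᵥ ψ))).re} with hSdef
  have hnuU : nu U = sInf N := rfl
  have hSlb : ∀ x ∈ S, 0 ≤ x := by
    rintro x ⟨ψ, Ω, hψ, hΩ, hΩ', hI, rfl⟩
    exact psd_re_nonneg hΩ _
  have hSbdd : BddBelow S := ⟨0, fun x hx => hSlb x hx⟩
  have hNlb : ∀ r ∈ N, 0 ≤ r := by
    rintro r ⟨ψ, hψ, rfl⟩; exact norm_nonneg _
  have hnu0 : 0 ≤ nu U := by rw [hnuU]; exact Real.sInf_nonneg hNlb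
  by_cases hd : d = 0
  · subst hd
    have hSempty : S = ∅ := by
      ext x
      simp only [hSdef, Set.mem_setOf_eq, Set.mem_empty_iff_false, iff_false, not_exists]
      intro ψ Ω h
      have : star ψ ⬝ᵥ ψ = 0 := by simp [dotProduct]
      rw [this] at h
      exact absurd h.1 (by norm_num)
    have hNempty : N = ∅ := by
      ext r
      simp only [hNdef, Set.mem_setOf_eq, Set.mem_empty_iff_false, iff_false, not_exists]
      intro ψ h
      have : star ψ ⬝ᵥ ψ = 0 := by simp [dotProduct]
      rw [this] at h
      exact absurd h.1 (by norm_num)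
    constructor
    · intro _; rw [hSempty, Real.sInf_empty]
    · intro hlt
      rw [hnuU, hNempty, Real.sInf_empty] at hlt
      exact absurd hlt (not_lt.mpr (Real.sqrt_nonneg δ))
  · have hdpos : 0 < d := Nat.pos_of_ne_zero hd
    set ψ0 : Fin d → ℂ := Pi.single ⟨0, hdpos⟩ 1 with hψ0def
    have hψ0 : star ψ0 ⬝ᵥ ψ0 = 1 := by
      simp [hψ0def, dotProduct, Pi.single_apply, apply_ite (star : ℂ → ℂ)]
    have hNne : N.Nonempty := ⟨_, ψ0, hψ0, rfl⟩
    have hnule : ∀ ψ : Fin d → ℂ, star ψ ⬝ᵥ ψ = 1 →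
        nu U ≤ ‖star ψ ⬝ᵥ (U *ᵥ ψ)‖ := by
      intro ψ hψ
      rw [hnuU]
      exact csInf_le ⟨0, fun r hr => hNlb r hr⟩ ⟨ψ, hψ, rfl⟩
    have habs1 : ∀ ψ : Fin d → ℂ, star ψ ⬝ᵥ ψ = 1 →
        ‖star ψ ⬝ᵥ (U *ᵥ ψ)‖ ≤ 1 := by
      intro ψ hψ
      have h1 := cs_dot ψ (U *ᵥ ψ)
      rw [hψ, unit_mulVec hU hψ] at h1
      simp only [Complex.one_re, mul_one] at h1
      nlinarith [norm_nonneg (star ψ ⬝ᵥ (U *ᵥ ψ))]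
    have hnu1 : nu U ≤ 1 := le_trans (hnule ψ0 hψ0) (habs1 ψ0 hψ0)
    have hSne : S.Nonempty := by
      obtain ⟨Ω, h1, h2, h3, h4⟩ := constr1 hU hδ0 hψ0
      exact ⟨_, ψ0, Ω, hψ0, h1, h2, h3, rfl⟩
    set G : ℝ → ℝ :=
      fun t => (max 0 (t * Real.sqrt (1-δ) - Real.sqrt (1-t^2) * Real.sqrt δ))^2 with hGdef
    have hGt : ∀ t, G t = (max 0 (t * Real.sqrt (1-δ) - Real.sqrt (1-t^2) * Real.sqrt δ))^2 :=
      fun t => rfl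
    have hGcont : Continuous G := by
      apply Continuous.pow
      apply Continuous.max continuous_const
      exact ((continuous_id.mul continuous_const).sub
        ((Real.continuous_sqrt.comp (continuous_const.sub (continuous_pow 2))).mul
          continuous_const))
    have hG0 : ∀ t, 0 ≤ G t := fun t => sq_nonneg _
    have hupp : sInf S ≤ G (nu U) := by
      apply le_of_forall_pos_le_add
      intro ε hε
      have hc : ContinuousAt G (nu U) := hGcont.continuousAt
      rw [Metric.continuousAt_iff] at hc
      obtain ⟨η, hη0, hη⟩ := hc ε hε
      have hlt : sInf N < nu U + η := by rw [← hnuU]; linarith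
      obtain ⟨r, hrN, hrlt⟩ := exists_lt_of_csInf_lt hNne hlt
      obtain ⟨ψ, hψu, rfl⟩ := hrN
      set ν := ‖star ψ ⬝ᵥ (U *ᵥ ψ)‖ with hνd
      have hν0 : 0 ≤ ν := norm_nonneg _
      have hν1 : ν ≤ 1 := habs1 ψ hψu
      have hGν : |G ν - G (nu U)| < ε := by
        have hdist : dist ν (nu U) < η := by
          rw [Real.dist_eq, abs_of_nonneg (by linarith [hnule ψ hψu] : (0:ℝ) ≤ ν - nu U)]
          linarith
        simpa [Real.dist_eq] using hη hdist
      have hG := abs_lt.mp hGν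
      by_cases hcase : ν ≤ Real.sqrt δ
      · have hsq : ‖star ψ ⬝ᵥ (U *ᵥ ψ)‖ ^ 2 ≤ δ := by
          nlinarith [Real.sq_sqrt hδ0, Real.sqrt_nonneg δ]
        obtain ⟨Ω, h1, h2, h3, h4⟩ := constr0 (δ := δ) hU hψu hsq
        have hmem : (0:ℝ) ∈ S := ⟨ψ, Ω, hψu, h1, h2, h3, h4.symm⟩
        have hle := csInf_le hSbdd hmem
        linarith [hG0 (nu U)]
      · push_neg at hcase
        obtain ⟨Ω, h1, h2, h3, h4⟩ := constr2 hU hδ0 hδ1 hψu hcase hν1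
        have hmem : ((ν * Real.sqrt (1-δ) - Real.sqrt (1-ν^2) * Real.sqrt δ)^2 : ℝ) ∈ S :=
          ⟨ψ, Ω, hψu, h1, h2, h3, h4.symm⟩
        have hle := csInf_le hSbdd hmem
        have hGeq : G ν = (ν * Real.sqrt (1-δ) - Real.sqrt (1-ν^2) * Real.sqrt δ)^2 := by
          rw [hGt, max_eq_right (L_nonneg hcase hν1 hδ0 hδ1)]
        linarith
    have hlow : ∀ x ∈ S, G (nu U) ≤ x := by
      rintro x ⟨ψ, Ω, hψu, hΩ, hΩ', hI, rfl⟩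
      set φ := U *ᵥ ψ with hφd
      have hφφ : star φ ⬝ᵥ φ = 1 := unit_mulVec hU hψu
      set ν := ‖star ψ ⬝ᵥ φ‖ with hνd
      set a := (star ψ ⬝ᵥ (Ω *ᵥ ψ)).re with had
      set b := (star φ ⬝ᵥ (Ω *ᵥ φ)).re with hbd
      have e1 : (star ψ ⬝ᵥ ((1 - Ω) *ᵥ ψ)).re = 1 - a := by
        rw [typeI_eq, Complex.sub_re, hψu, Complex.one_re]
      have e2 : (star φ ⬝ᵥ ((1 - Ω) *ᵥ φ)).re = 1 - b := by
        rw [typeI_eq, Complex.sub_re, hφφ, Complex.one_re]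
      have ha0 : 0 ≤ a := psd_re_nonneg hΩ ψ
      have hb0 : 0 ≤ b := psd_re_nonneg hΩ φ
      have ha1 : a ≤ 1 := by have := psd_re_nonneg hΩ' ψ; rw [e1] at this; linarith
      have hb1 : b ≤ 1 := by have := psd_re_nonneg hΩ' φ; rw [e2] at this; linarith
      have haδ : 1 - a ≤ δ := by rw [← e1]; exact hI
      have hkey := key_ineq hΩ hΩ' ψ φ
      rw [e1, e2] at hkey
      have halg := alg1 (norm_nonneg _) (habs1 ψ hψu) ha0 ha1 hb0 hb1 hkey
      have hν0' : 0 ≤ ν := norm_nonneg _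
      have hνle : nu U ≤ ν := hnule ψ hψu
      have hsa : Real.sqrt (1-δ) ≤ Real.sqrt a := Real.sqrt_le_sqrt (by linarith)
      have hsa' : Real.sqrt (1-a) ≤ Real.sqrt δ := Real.sqrt_le_sqrt (by linarith)
      have hsν : Real.sqrt (1-ν^2) ≤ Real.sqrt (1-(nu U)^2) :=
        Real.sqrt_le_sqrt (by nlinarith)
      have hchain : nu U * Real.sqrt (1-δ) - Real.sqrt (1-(nu U)^2) * Real.sqrt δ
          ≤ Real.sqrt b := by
        have t1 : nu U * Real.sqrt (1-δ) ≤ ν * Real.sqrt a :=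
          mul_le_mul hνle hsa (Real.sqrt_nonneg _) hν0'
        have t2 : Real.sqrt (1-ν^2) * Real.sqrt (1-a) ≤ Real.sqrt (1-(nu U)^2) * Real.sqrt δ :=
          mul_le_mul hsν hsa' (Real.sqrt_nonneg _) (Real.sqrt_nonneg _)
        linarith
      rcases le_or_gt (nu U * Real.sqrt (1-δ) - Real.sqrt (1-(nu U)^2) * Real.sqrt δ) 0
        with hL | hL
      · rw [hGt, max_eq_left hL]
        simpa using hb0
      · rw [hGt, max_eq_right hL.le]
        have hsqb := Real.sq_sqrt hb0
        nlinarith [Real.sqrt_nonneg b]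
    constructor
    · intro hle
      have hGeq0 : G (nu U) = 0 := by
        rw [hGt, max_eq_left (L_nonpos hle hnu0 hnu1 hδ0 hδ1)]
        norm_num
      have h1 : sInf S ≤ 0 := by rw [← hGeq0]; exact hupp
      exact le_antisymm h1 (Real.sInf_nonneg hSlb)
    · intro hlt
      have hGeq : G (nu U)
          = (nu U * Real.sqrt (1-δ) - Real.sqrt (1-(nu U)^2) * Real.sqrt δ)^2 := by
        rw [hGt, max_eq_right (L_nonneg hlt hnu1 hδ0 hδ1)]
      have h2 : G (nu U) ≤ sInf S := le_csInf hSne hlow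
      rw [← hGeq]
      exact le_antisymm hupp h2
end

section
/- Let ψ, φ be unit vectors in ℂ^d with overlap a = |⟨ψ|φ⟩| < 1, and let δ ∈ (0,1]. For any N ≥ ⌈log(√δ)/log(a)⌉ (so that a^N ≤ √δ), there exists an effect Ω on (ℂ^d)^{⊗N} with 0 ≤ Ω ≤ I such that ⟨ψ^{⊗N}|Ω|ψ^{⊗N}⟩ ≥ 1 − δ and ⟨φ^{⊗N}|Ω|φ^{⊗N}⟩ = 0. -/
open Matrix
open scoped ComplexOrder

/-- The `N`-fold tensor power of a vector in `ℂ^d`. -/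
noncomputable def tpow {d : ℕ} (ψ : Fin d → ℂ) (N : ℕ) : (Fin N → Fin d) → ℂ :=
  fun f => ∏ k, ψ (f k)

lemma tpow_dot {d : ℕ} (ψ χ : Fin d → ℂ) (N : ℕ) :
    star (tpow ψ N) ⬝ᵥ tpow χ N = (star ψ ⬝ᵥ χ) ^ N := by
  have : (star ψ ⬝ᵥ χ) ^ N = ∏ _k : Fin N, ∑ i, star (ψ i) * χ i := by
    simp [dotProduct, Finset.prod_const]
  rw [this, Finset.prod_univ_sum]
  simp [dotProduct, tpow, Fintype.piFinset_univ, Finset.prod_mul_distrib]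

theorem stmt14 {d : ℕ} (ψ φ : Fin d → ℂ) (a δ : ℝ) (N : ℕ)
    (hψ : star ψ ⬝ᵥ ψ = 1) (hφ : star φ ⬝ᵥ φ = 1)
    (ha : a = ‖star ψ ⬝ᵥ φ‖) (ha1 : a < 1)
    (hδ : δ ∈ Set.Ioc (0 : ℝ) 1)
    (hN : a ^ N ≤ Real.sqrt δ) :
    ∃ Ω : Matrix (Fin N → Fin d) (Fin N → Fin d) ℂ,
      Ω.PosSemidef ∧ (1 - Ω).PosSemidef ∧
      1 - δ ≤ (star (tpow ψ N) ⬝ᵥ (Ω *ᵥ tpow ψ N)).re ∧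
      star (tpow φ N) ⬝ᵥ (Ω *ᵥ tpow φ N) = 0 := by
  set Φ := tpow φ N with hΦdef
  set Ψ := tpow ψ N with hΨdef
  set P : Matrix (Fin N → Fin d) (Fin N → Fin d) ℂ := vecMulVec Φ (star Φ) with hP
  have hΦΦ : star Φ ⬝ᵥ Φ = 1 := by rw [hΦdef, tpow_dot, hφ, one_pow]
  have hΨΨ : star Ψ ⬝ᵥ Ψ = 1 := by rw [hΨdef, tpow_dot, hψ, one_pow]
  -- P *ᵥ x = (star Φ ⬝ᵥ x) • Φ
  have hPmul : ∀ x, P *ᵥ x = fun i => Φ i * (star Φ ⬝ᵥ x) := by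
    intro x; funext i
    simp [hP, mulVec, vecMulVec, dotProduct, Finset.mul_sum, mul_assoc]
  have hquad : ∀ x : (Fin N → Fin d) → ℂ,
      star x ⬝ᵥ (P *ᵥ x) = star (star Φ ⬝ᵥ x) * (star Φ ⬝ᵥ x) := by
    intro x
    rw [hPmul]
    rw [← star_dotProduct (v := x) (w := Φ)]
    simp only [dotProduct, Pi.star_apply]
    rw [Finset.sum_mul]
    exact Finset.sum_congr rfl fun f _ => by ring
  have hPherm : P.IsHermitian := by
    ext i j
    simp [hP, conjTranspose_apply, vecMulVec_apply, mul_comm]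
  have hPpsd : P.PosSemidef := by
    refine PosSemidef.of_dotProduct_mulVec_nonneg hPherm (fun x => ?_)
    rw [hquad]
    exact star_mul_self_nonneg _
  have hQherm : (1 - P).IsHermitian := (isHermitian_one).sub hPherm
  have hQidem : (1 - P) * (1 - P) = 1 - P := by
    have hPP : P * P = P := by
      ext i j
      simp only [hP, mul_apply, vecMulVec_apply]
      have h1 : ∑ k : Fin N → Fin d, star (Φ k) * Φ k = (1 : ℂ) := hΦΦ
      calc ∑ k, Φ i * star Φ k * (Φ k * star Φ j)
          = Φ i * star Φ j * ∑ k, star (Φ k) * Φ k := by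
            rw [Finset.mul_sum]; exact Finset.sum_congr rfl fun k _ => by
              simp only [Pi.star_apply]; ring
        _ = Φ i * star Φ j := by rw [h1, mul_one]
    simp only [sub_mul, mul_sub, one_mul, mul_one, hPP]
    rw [sub_self, sub_zero]
  have hQpsd : (1 - P).PosSemidef := by
    refine PosSemidef.of_dotProduct_mulVec_nonneg hQherm (fun x => ?_)
    have h1 : star x ⬝ᵥ ((1 - P) *ᵥ x) = star ((1 - P) *ᵥ x) ⬝ᵥ ((1 - P) *ᵥ x) := by
      have h2 : star ((1 - P) *ᵥ x) = star x ᵥ* (1 - P) := by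
        rw [star_mulVec, hQherm.eq]
      conv_lhs => rw [← hQidem]
      rw [← mulVec_mulVec, dotProduct_mulVec, ← h2]
    rw [h1]
    exact dotProduct_star_self_nonneg _
  refine ⟨1 - P, hQpsd, by simpa using hPpsd, ?_, ?_⟩
  · have hc : star Φ ⬝ᵥ Ψ = (star φ ⬝ᵥ ψ) ^ N := by rw [hΦdef, hΨdef, tpow_dot]
    have habs : ‖star φ ⬝ᵥ ψ‖ = a := by
      rw [ha, star_dotProduct (v := ψ) (w := φ)]
      simp
    have key : star Ψ ⬝ᵥ ((1 - P) *ᵥ Ψ) = 1 - star (star Φ ⬝ᵥ Ψ) * (star Φ ⬝ᵥ Ψ) := by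
      rw [sub_mulVec, dotProduct_sub, one_mulVec, hΨΨ, hquad]
    rw [key]
    have : (star (star Φ ⬝ᵥ Ψ) * (star Φ ⬝ᵥ Ψ)).re = (a ^ N) ^ 2 := by
      have := Complex.normSq_eq_norm_sq (star Φ ⬝ᵥ Ψ)
      rw [show star (star Φ ⬝ᵥ Ψ) = (starRingEnd ℂ) (star Φ ⬝ᵥ Ψ) from rfl,
        mul_comm, Complex.mul_conj]
      simp only [Complex.ofReal_re, this]
      rw [hc, norm_pow, habs]
    simp only [Complex.sub_re, Complex.one_re, this]
    have ha0 : 0 ≤ a := ha ▸ norm_nonneg _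
    have hδ0 : 0 < δ := hδ.1
    have : (a ^ N) ^ 2 ≤ δ := by
      calc (a ^ N) ^ 2 ≤ Real.sqrt δ ^ 2 := by
            apply pow_le_pow_left₀ (pow_nonneg ha0 _) hN
          _ = δ := Real.sq_sqrt hδ0.le
    linarith
  · rw [sub_mulVec, dotProduct_sub, one_mulVec, hΦΦ, hquad, hΦΦ]
    simp
end
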